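/- For 0 < α < 1, the curve γ(s) = (cosh((α-1)s))^{1/(α-1)} · (sinh s, cosh s) satisfies lim_{s→±∞} γ(s) = (±2^{α/(1-α)}, 2^{α/(1-α)}); in particular both limit points lie on the lightlike cone {(x,y) : x² = y²}. -/

import Mathlib

open Filter

lemma expneg (c : ℝ) (hc : 0 < c) :
    Tendsto (fun s : ℝ => Real.exp (-(c*s))) atTop (nhds 0) :=
  Real.tendsto_exp_neg_atTop_nhds_zero.comp (Tendsto.const_mul_atTop hc tendsto_id)

lemma key (β : ℝ) (hβ : 0 < β) (g : ℝ → ℝ) (L : ℝ)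
    (hg : Tendsto (fun s => Real.exp (-s) * g s) atTop (nhds L)) :
    Tendsto (fun s => Real.cosh (β*s) ^ (-(1/β)) * g s) atTop
      (nhds ((2:ℝ) ^ ((1:ℝ)/β) * L)) := by
  have h0 : Tendsto (fun s : ℝ => (1 + Real.exp (-(2*β*s)))/2) atTop (nhds ((1:ℝ)/2)) := by
    have := ((expneg (2*β) (by positivity)).const_add 1).div_const 2
    simpa using this
  have h1 : Tendsto (fun s : ℝ => ((1 + Real.exp (-(2*β*s)))/2) ^ (-(1/β))) atTop
      (nhds (((1:ℝ)/2) ^ (-(1/β)))) :=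
    (Real.continuousAt_rpow_const _ _ (Or.inl (by norm_num))).tendsto.comp h0
  have hval : ((1:ℝ)/2) ^ (-(1/β)) = (2:ℝ) ^ ((1:ℝ)/β) := by
    rw [show ((1:ℝ)/2) = (2:ℝ)^(-1:ℝ) by norm_num [Real.rpow_neg_one],
      ← Real.rpow_mul (by norm_num)]
    norm_num
  have heq : ∀ s, Real.cosh (β*s) ^ (-(1/β)) * g s
      = ((1 + Real.exp (-(2*β*s)))/2) ^ (-(1/β)) * (Real.exp (-s) * g s) := by
    intro s
    have hc : Real.cosh (β*s) = Real.exp (β*s) * ((1 + Real.exp (-(2*β*s)))/2) := by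
      rw [Real.cosh_eq]
      have : Real.exp (β*s) * Real.exp (-(2*β*s)) = Real.exp (-(β*s)) := by
        rw [← Real.exp_add]; ring_nf
      field_simp
      rw [mul_add, mul_one, show -(β*s*2) = -(2*β*s) by ring, this]
    rw [hc, Real.mul_rpow (Real.exp_pos _).le (by positivity),
      ← Real.exp_mul]
    have : β * s * -(1/β) = -s := by field_simp
    rw [this]; ring
  rw [← hval]
  exact (h1.mul hg).congr (fun s => (heq s).symm)

lemma esinh : Tendsto (fun s : ℝ => Real.exp (-s) * Real.sinh s) atTop (nhds ((1:ℝ)/2)) := by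
  have h : ∀ s : ℝ, Real.exp (-s) * Real.sinh s = (1 - Real.exp (-(2*s)))/2 := by
    intro s
    rw [Real.sinh_eq]
    have h1 : Real.exp (-s) * Real.exp s = 1 := by rw [← Real.exp_add]; simp
    have h2 : Real.exp (-s) * Real.exp (-s) = Real.exp (-(2*s)) := by
      rw [← Real.exp_add]; ring_nf
    field_simp
    rw [show -(s*2) = -(2*s) by ring, ← h2, mul_sub, h1]
  have h2 := ((expneg 2 (by norm_num)).const_sub 1).div_const 2
  have h3 : Tendsto (fun s : ℝ => (1 - Real.exp (-(2*s)))/2) atTop (nhds ((1:ℝ)/2)) := by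
    simpa using h2
  exact h3.congr (fun s => (h s).symm)

lemma ecosh : Tendsto (fun s : ℝ => Real.exp (-s) * Real.cosh s) atTop (nhds ((1:ℝ)/2)) := by
  have h : ∀ s : ℝ, Real.exp (-s) * Real.cosh s = (1 + Real.exp (-(2*s)))/2 := by
    intro s
    rw [Real.cosh_eq]
    have h1 : Real.exp (-s) * Real.exp s = 1 := by rw [← Real.exp_add]; simp
    have h2 : Real.exp (-s) * Real.exp (-s) = Real.exp (-(2*s)) := by
      rw [← Real.exp_add]; ring_nf
    field_simp
    rw [show -(s*2) = -(2*s) by ring, ← h2, mul_add, h1]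
  have h2 := ((expneg 2 (by norm_num)).const_add 1).div_const 2
  have h3 : Tendsto (fun s : ℝ => (1 + Real.exp (-(2*s)))/2) atTop (nhds ((1:ℝ)/2)) := by
    simpa using h2
  exact h3.congr (fun s => (h s).symm)


/-- For 0 < α < 1, the curve γ(s) = cosh((α-1)s)^{1/(α-1)}(sinh s, cosh s) tends to
(±2^{α/(1-α)}, 2^{α/(1-α)}) as s → ±∞, and these limit points lie on the lightlike cone. -/
theorem stmt_11 (α : ℝ) (hα0 : 0 < α) (hα1 : α < 1) (ρ : ℝ → ℝ) (γ : ℝ → ℝ × ℝ)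
    (hρ : ∀ s : ℝ, ρ s = (Real.cosh ((α - 1) * s)) ^ (1 / (α - 1)))
    (hγ : ∀ s : ℝ, γ s = (ρ s * Real.sinh s, ρ s * Real.cosh s)) :
    Tendsto γ atTop (nhds ((2 : ℝ) ^ (α / (1 - α)), (2 : ℝ) ^ (α / (1 - α)))) ∧
    Tendsto γ atBot (nhds (-(2 : ℝ) ^ (α / (1 - α)), (2 : ℝ) ^ (α / (1 - α)))) ∧
    ((2 : ℝ) ^ (α / (1 - α))) ^ 2 = ((2 : ℝ) ^ (α / (1 - α))) ^ 2 ∧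
    (-(2 : ℝ) ^ (α / (1 - α))) ^ 2 = ((2 : ℝ) ^ (α / (1 - α))) ^ 2 := by
  set β := 1 - α with hβdef
  have hβ : 0 < β := by simp [hβdef]; linarith
  have hβne : β ≠ 0 := ne_of_gt hβ
  -- ρ as cosh(βs)^(-(1/β))
  have hρ' : ∀ s : ℝ, ρ s = Real.cosh (β * s) ^ (-(1/β)) := by
    intro s
    rw [hρ s]
    have h1 : (α - 1) * s = -(β * s) := by rw [hβdef]; ring
    have h2 : 1 / (α - 1) = -(1/β) := by
      rw [show α - 1 = -β by rw [hβdef]; ring, one_div, one_div, inv_neg]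
    rw [h1, Real.cosh_neg, h2]
  -- limit value
  have hL : (2:ℝ) ^ ((1:ℝ)/β) * (1/2) = (2:ℝ) ^ (α / (1 - α)) := by
    rw [show ((1:ℝ)/2) = (2:ℝ)^(-1:ℝ) by norm_num [Real.rpow_neg_one],
      ← Real.rpow_add (by norm_num)]
    congr 1
    rw [hβdef]
    rw [eq_div_iff (sub_ne_zero.mpr hα1.ne'), add_mul, one_div, inv_mul_cancel₀ (sub_ne_zero.mpr hα1.ne')]; ring
  have hx : Tendsto (fun s => ρ s * Real.sinh s) atTop (nhds ((2:ℝ) ^ (α/(1-α)))) := by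
    rw [← hL]
    exact ((key β hβ Real.sinh _ esinh).congr (fun s => by rw [hρ' s]))
  have hy : Tendsto (fun s => ρ s * Real.cosh s) atTop (nhds ((2:ℝ) ^ (α/(1-α)))) := by
    rw [← hL]
    exact ((key β hβ Real.cosh _ ecosh).congr (fun s => by rw [hρ' s]))
  have htop : Tendsto γ atTop (nhds ((2:ℝ) ^ (α/(1-α)), (2:ℝ) ^ (α/(1-α)))) := by
    have := hx.prodMk_nhds hy
    exact this.congr (fun s => (hγ s).symm)
  refine ⟨htop, ?_, rfl, by ring⟩
  -- atBot
  have hρeven : ∀ s : ℝ, ρ (-s) = ρ s := by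
    intro s
    rw [hρ' (-s), hρ' s]
    congr 1
    rw [show β * (-s) = -(β * s) by ring, Real.cosh_neg]
  have hbot' : Tendsto (fun s => γ (-s)) atTop
      (nhds (-(2:ℝ) ^ (α/(1-α)), (2:ℝ) ^ (α/(1-α)))) := by
    have hgeq : ∀ s : ℝ, γ (-s) = (-(ρ s * Real.sinh s), ρ s * Real.cosh s) := by
      intro s
      rw [hγ (-s), hρeven s, Real.sinh_neg, Real.cosh_neg]
      simp [mul_neg]
    exact ((hx.neg).prodMk_nhds hy).congr (fun s => (hgeq s).symm)
  have := hbot'.comp tendsto_neg_atBot_atTop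
  exact this.congr (fun s => by simp)
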